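/- Let K be a field and φ a field automorphism of K, extended coefficientwise to a ring automorphism of K((z)) fixing z. Let a₁, …, a_n be integers and D = diag(z^{a₁}, …, z^{a_n}). If g ∈ GL_n(K((z))) satisfies φ(g) = D⁻¹·g·D (where φ is applied entrywise), then g_{ij} = 0 whenever a_i ≠ a_j; consequently g commutes with D and φ(g) = g, so all entries of g lie in the fixed field K^φ((z)). -/

import Mathlib

private lemma shift_zero {K : Type*} [Field K] (f : LaurentSeries K) {e : ℤ} (he : 0 < e)
    (h : ∀ m : ℤ, f.coeff m ≠ 0 → f.coeff (m - e) ≠ 0) : f = 0 := by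
  by_contra hf
  exact (h f.order (mt HahnSeries.coeff_order_eq_zero.mp hf))
    (HahnSeries.coeff_eq_zero_of_lt_order (by omega))

theorem sigma_conjugation_fixed_by_diagonal {K : Type*} [Field K] (φ : K ≃+* K)
    {n : ℕ} (a : Fin n → ℤ)
    (Φ : LaurentSeries K →+* LaurentSeries K)
    (hΦ : ∀ (f : LaurentSeries K) (m : ℤ), (Φ f).coeff m = φ (f.coeff m))
    (g : Matrix (Fin n) (Fin n) (LaurentSeries K)) (hg : IsUnit g.det)
    (heq : g.map ⇑Φ =
      (Matrix.diagonal fun i => (HahnSeries.single (-(a i)) (1 : K) : LaurentSeries K)) * g *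
        (Matrix.diagonal fun i => (HahnSeries.single (a i) (1 : K) : LaurentSeries K))) :
    (∀ i j : Fin n, a i ≠ a j → g i j = 0) ∧
    g * (Matrix.diagonal fun i => (HahnSeries.single (a i) (1 : K) : LaurentSeries K)) =
      (Matrix.diagonal fun i => (HahnSeries.single (a i) (1 : K) : LaurentSeries K)) * g ∧
    g.map ⇑Φ = g ∧
    ∀ (i j : Fin n) (m : ℤ), φ ((g i j).coeff m) = (g i j).coeff m := by
  -- entrywise coefficient relation
  have key : ∀ (i j : Fin n) (m : ℤ),
      φ ((g i j).coeff m) = (g i j).coeff (m + a i - a j) := by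
    intro i j m
    have h1 : Φ (g i j) =
        HahnSeries.single (-(a i)) (1 : K) * g i j * HahnSeries.single (a j) (1 : K) := by
      have := congrFun (congrFun heq i) j
      simpa [Matrix.map_apply, Matrix.mul_diagonal, Matrix.diagonal_mul, mul_assoc] using this
    have h2 := congrArg (fun f : LaurentSeries K => f.coeff m) h1
    simp only [hΦ] at h2
    rw [h2]
    have : m = (m + a i - a j + a j) + (-(a i)) := by ring
    rw [this, mul_assoc, HahnSeries.coeff_single_mul_add, HahnSeries.coeff_mul_single_add]
    ring
  have h0 : ∀ i j : Fin n, a i ≠ a j → g i j = 0 := by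
    intro i j hij
    rcases lt_or_gt_of_ne hij with h | h
    · -- a i < a j : coeff m ≠ 0 → coeff (m - (a j - a i)) ≠ 0
      refine shift_zero (g i j) (e := a j - a i) (by omega) fun m hm => ?_
      have := key i j m
      intro hz
      rw [show m + a i - a j = m - (a j - a i) by ring, hz] at this
      exact hm (by simpa using (φ.injective (by simpa using this)))
    · -- a i > a j : use key at m - a i + a j
      refine shift_zero (g i j) (e := a i - a j) (by omega) fun m hm => ?_
      have := key i j (m - a i + a j)
      rw [show m - a i + a j + a i - a j = m by ring] at this
      intro hz
      rw [show m - (a i - a j) = m - a i + a j by ring] at hz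
      rw [hz, map_zero] at this
      exact hm this.symm
  refine ⟨h0, ?_, ?_, ?_⟩
  · ext i j
    simp only [Matrix.mul_diagonal, Matrix.diagonal_mul]
    by_cases hij : a i = a j
    · rw [hij, mul_comm]
    · rw [h0 i j hij, zero_mul, mul_zero]
  · rw [heq]
    ext i j
    simp only [Matrix.mul_diagonal, Matrix.diagonal_mul]
    by_cases hij : a i = a j
    · rw [hij, mul_comm, ← mul_assoc, HahnSeries.single_mul_single]
      simp
    · rw [h0 i j hij]; simp
  · intro i j m
    have h3 : g.map ⇑Φ = g := by
      rw [heq]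
      ext i j
      simp only [Matrix.mul_diagonal, Matrix.diagonal_mul]
      by_cases hij : a i = a j
      · rw [hij, mul_comm, ← mul_assoc, HahnSeries.single_mul_single]
        simp
      · rw [h0 i j hij]; simp
    have := congrFun (congrFun h3 i) j
    rw [Matrix.map_apply] at this
    rw [← hΦ, this]
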